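/- Let K be a compact Hausdorff space, X a Banach space, and F : K → (X*, w*) continuous such that T_F is a U-embedding. If t, s ∈ K satisfy F(t) = F(s) and t ≠ s, then ‖F(t)‖ < 1. Similarly, if F(t) = −F(s), then ‖F(t)‖ < 1. -/

import Mathlib

/-- The operator `T_F : X → C(K)` associated to a weak*-continuous `F : K → X*`,
given by `(T_F x)(k) = ⟨x, F(k)⟩`. -/
noncomputable def TF {K X : Type*} [TopologicalSpace K] [CompactSpace K]
    [NormedAddCommGroup X] [NormedSpace ℝ X] (F : C(K, WeakDual ℝ X)) (x : X) : C(K, ℝ) :=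
  ⟨fun k => F k x, (WeakDual.eval_continuous x).comp (map_continuous F)⟩

/-- Evaluation at a point as a continuous linear functional on `C(K, ℝ)`. -/
noncomputable def evalAt {K : Type*} [TopologicalSpace K] [CompactSpace K] (k : K) :
    C(K, ℝ) →L[ℝ] ℝ :=
  LinearMap.mkContinuous
    { toFun := fun f => f k, map_add' := fun _ _ => rfl, map_smul' := fun _ _ => rfl } 1
    (fun f => by simpa using f.norm_coe_le_norm k)

lemma evalAt_apply {K : Type*} [TopologicalSpace K] [CompactSpace K] (k : K) (f : C(K, ℝ)) :
    evalAt k f = f k := rfl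

lemma evalAt_norm_le {K : Type*} [TopologicalSpace K] [CompactSpace K] (k : K) :
    ‖evalAt (K := K) k‖ ≤ 1 :=
  LinearMap.mkContinuous_norm_le _ zero_le_one _

/-- If `T_F : X → C(K)` is a U-embedding, `t, s ∈ K`, then: if `F(t) = F(s)` with `t ≠ s`
then `‖F(t)‖ < 1`; and if `F(t) = −F(s)` then `‖F(t)‖ < 1`. -/
theorem norm_lt_one_of_repeated_value
    {K X : Type*} [TopologicalSpace K] [CompactSpace K] [T2Space K]
    [NormedAddCommGroup X] [NormedSpace ℝ X]
    (F : C(K, WeakDual ℝ X)) (hiso : ∀ x : X, ‖TF F x‖ = ‖x‖)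
    (hU : ∀ f : X →L[ℝ] ℝ, ∃! g : C(K, ℝ) →L[ℝ] ℝ,
      (∀ x : X, g (TF F x) = f x) ∧ ‖g‖ = ‖f‖)
    (t s : K) :
    (F t = F s → t ≠ s → ‖WeakDual.toStrongDual (F t)‖ < 1) ∧
    (F t = -F s → ‖WeakDual.toStrongDual (F t)‖ < 1) := by
  set f := WeakDual.toStrongDual (F t) with hf
  have hfx : ∀ x : X, f x = F t x := fun x => rfl
  have hle : ‖f‖ ≤ 1 := by
    apply ContinuousLinearMap.opNorm_le_bound _ zero_le_one
    intro x
    have h1 : ‖(TF F x) t‖ ≤ ‖TF F x‖ := (TF F x).norm_coe_le_norm t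
    rw [hiso x] at h1
    have h2 : ‖F t x‖ ≤ ‖x‖ := h1
    simpa [hfx] using h2
  -- key uniqueness step
  have key : ∀ g : C(K, ℝ) →L[ℝ] ℝ, ‖f‖ = 1 →
      (∀ x : X, g (TF F x) = f x) → ‖g‖ ≤ 1 → g = evalAt t := by
    intro g hnorm hext hgle
    obtain ⟨g0, _, huniq⟩ := hU f
    have hnormge : ∀ h : C(K, ℝ) →L[ℝ] ℝ, (∀ x : X, h (TF F x) = f x) → (1 : ℝ) ≤ ‖h‖ := by
      intro h hh
      rw [← hnorm]
      apply ContinuousLinearMap.opNorm_le_bound _ (norm_nonneg h)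
      intro x
      rw [← hh x, ← hiso x]
      exact h.le_opNorm _
    have hg : g = g0 := huniq g ⟨hext, by rw [hnorm]; exact le_antisymm hgle (hnormge g hext)⟩
    have hevext : ∀ x : X, evalAt t (TF F x) = f x := fun x => rfl
    have hev : evalAt t = g0 :=
      huniq (evalAt t) ⟨hevext, by
        rw [hnorm]; exact le_antisymm (evalAt_norm_le t) (hnormge _ hevext)⟩
    rw [hg, hev]
  constructor
  · intro hFs hne
    rcases lt_or_eq_of_le hle with h | h
    · exact h
    · exfalso
      have hext : ∀ x : X, evalAt s (TF F x) = f x := by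
        intro x
        show F s x = F t x
        rw [hFs]
      have heq : evalAt s = evalAt t := key _ h hext (evalAt_norm_le s)
      obtain ⟨g, hg0, hg1, -⟩ := exists_continuous_zero_one_of_isClosed
        (isClosed_singleton (x := s)) (isClosed_singleton (x := t))
        (by simpa [Set.disjoint_singleton] using (Ne.symm hne))
      have := congrArg (fun h : C(K, ℝ) →L[ℝ] ℝ => h g) heq
      simp only [evalAt_apply] at this
      rw [hg0 rfl, hg1 rfl] at this
      simp at this
  · intro hFs
    rcases lt_or_eq_of_le hle with h | h
    · exact h
    · exfalso
      have hext : ∀ x : X, (-(evalAt s)) (TF F x) = f x := by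
        intro x
        show -(F s x) = F t x
        rw [hFs]
        rfl
      have heq : -(evalAt s) = evalAt t := key _ h hext ((norm_neg (evalAt (K := K) s)).trans_le (evalAt_norm_le s))
      have := congrArg (fun h : C(K, ℝ) →L[ℝ] ℝ => h (ContinuousMap.const K 1)) heq
      simp only [ContinuousLinearMap.neg_apply, evalAt_apply, ContinuousMap.const_apply] at this
      linarith
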